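/- Let 𝕃 be a lattice (partially ordered set closed under binary suprema and infima), 𝕃* the set of lattice homomorphisms from 𝕃 into [-1,1] with the product topology, and C_ph(𝕃*) the AM-space of continuous positively homogeneous real functions on 𝕃* with sup norm. Then every nonzero x* ∈ 𝕃*, viewed via the evaluation functional f ↦ f(x*) on C_ph(𝕃*), attains its norm; moreover its norm equals max{|inf_{x∈𝕃} x*(x)|, |sup_{x∈𝕃} x*(x)|}. -/

import Mathlib

/-- `𝕃*`: the set of lattice homomorphisms from a lattice `L` into `[-1,1]`, as a subset of
`L → ℝ` (carrying the product topology on the subtype). -/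
def LatticeDual (L : Type*) [Lattice L] : Set (L → ℝ) :=
  {φ | (∀ x : L, |φ x| ≤ 1) ∧ (∀ x y : L, φ (x ⊔ y) = max (φ x) (φ y)) ∧
    (∀ x y : L, φ (x ⊓ y) = min (φ x) (φ y))}

/-- `C_ph(𝕃*)`: the continuous positively homogeneous real-valued functions on `𝕃*`. -/
def Cph (L : Type*) [Lattice L] : Set ((LatticeDual L) → ℝ) :=
  {f | Continuous f ∧ ∀ (φ ψ : LatticeDual L) (r : ℝ), 0 ≤ r → r ≤ 1 →
    (ψ : L → ℝ) = r • (φ : L → ℝ) → f ψ = r * f φ}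

open Filter Finset

section Aux
variable {L : Type*} [Lattice L]

noncomputable def eAux (xs : L → ℝ) (z : ℕ → L) (n : ℕ) (φ : LatticeDual L) : ℝ :=
  (if 0 ≤ xs (z n) then (1:ℝ) else -1) * (φ : L → ℝ) (z n)

noncomputable def FAux (xs : L → ℝ) (z : ℕ → L) (t : ℕ → ℝ) (n : ℕ) (φ : LatticeDual L) : ℝ :=
  eAux xs z n φ - ∑ k ∈ Finset.range n,
    max ((t k / t (k+1)) * eAux xs z (k+1) φ - eAux xs z k φ) 0

noncomputable def fAux (xs : L → ℝ) (z : ℕ → L) (t : ℕ → ℝ) (φ : LatticeDual L) : ℝ :=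
  ⨆ n, FAux xs z t n φ

lemma eAux_abs_le (xs : L → ℝ) (z : ℕ → L) (n : ℕ) (φ : LatticeDual L) :
    |eAux xs z n φ| ≤ 1 := by
  have h1 := φ.2.1 (z n)
  unfold eAux
  split <;> simp [abs_mul] <;> simpa [abs_le] using h1

lemma eAux_cont (xs : L → ℝ) (z : ℕ → L) (n : ℕ) : Continuous (eAux xs z n) :=
  continuous_const.mul ((continuous_apply (z n)).comp continuous_subtype_val)

lemma eAux_xs (xs : L → ℝ) (hxs : xs ∈ LatticeDual L) (z : ℕ → L) (n : ℕ) :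
    eAux xs z n ⟨xs, hxs⟩ = |xs (z n)| := by
  unfold eAux
  split_ifs with h
  · simp [abs_of_nonneg h]
  · push_neg at h
    simp [abs_of_neg h]

lemma eAux_smul (xs : L → ℝ) (z : ℕ → L) (n : ℕ) (φ ψ : LatticeDual L) (r : ℝ)
    (hψ : (ψ : L → ℝ) = r • (φ : L → ℝ)) : eAux xs z n ψ = r * eAux xs z n φ := by
  unfold eAux
  rw [hψ]
  simp only [Pi.smul_apply, smul_eq_mul]
  ring

end Aux

section Main
variable {L : Type*} [Lattice L] (xs : L → ℝ) (z : ℕ → L) (t : ℕ → ℝ)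

lemma FAux_le_e (n : ℕ) (φ : LatticeDual L) : FAux xs z t n φ ≤ eAux xs z n φ := by
  unfold FAux
  have : (0:ℝ) ≤ ∑ k ∈ Finset.range n,
      max ((t k / t (k+1)) * eAux xs z (k+1) φ - eAux xs z k φ) 0 :=
    Finset.sum_nonneg fun k _ => le_max_right _ _
  linarith

lemma FAux_le_one (n : ℕ) (φ : LatticeDual L) : FAux xs z t n φ ≤ 1 :=
  (FAux_le_e xs z t n φ).trans ((le_abs_self _).trans (eAux_abs_le xs z n φ))

lemma FAux_bdd (φ : LatticeDual L) : BddAbove (Set.range fun n => FAux xs z t n φ) :=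
  ⟨1, by rintro _ ⟨n, rfl⟩; exact FAux_le_one xs z t n φ⟩

lemma FAux_zero (φ : LatticeDual L) : FAux xs z t 0 φ = eAux xs z 0 φ := by
  simp [FAux]

lemma fAux_le_one (φ : LatticeDual L) : fAux xs z t φ ≤ 1 :=
  ciSup_le fun n => FAux_le_one xs z t n φ

lemma neg_one_le_fAux (φ : LatticeDual L) : -1 ≤ fAux xs z t φ := by
  have h1 : -1 ≤ FAux xs z t 0 φ := by
    rw [FAux_zero]
    have := eAux_abs_le xs z 0 φ
    rw [abs_le] at this
    exact this.1
  exact h1.trans (le_ciSup (FAux_bdd xs z t φ) 0)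

lemma FAux_step (n : ℕ) (φ : LatticeDual L) (hc1 : t n / t (n+1) ≤ 1) :
    FAux xs z t (n+1) φ ≤ FAux xs z t n φ + (1 - t n / t (n+1)) := by
  unfold FAux
  rw [Finset.sum_range_succ]
  set u := eAux xs z n φ with hu
  set v := eAux xs z (n+1) φ with hv
  set c := t n / t (n+1) with hc
  have hv1 : v ≤ 1 := (le_abs_self _).trans (eAux_abs_le xs z (n+1) φ)
  rcases le_or_gt (c * v - u) 0 with h | h
  · rw [max_eq_right h]
    nlinarith [mul_nonneg (sub_nonneg.2 hc1) (sub_nonneg.2 hv1)]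
  · rw [max_eq_left h.le]
    nlinarith [mul_nonneg (sub_nonneg.2 hc1) (sub_nonneg.2 hv1)]

end Main

section Main2
variable {L : Type*} [Lattice L] (xs : L → ℝ) (z : ℕ → L) (t : ℕ → ℝ) (M : ℝ)
variable (ht0 : 0 < t 0) (htm : Monotone t) (hub : ∀ n, t n ≤ M)

include ht0 htm in
lemma FAux_chain (N m : ℕ) (hNm : N ≤ m) (φ : LatticeDual L) :
    FAux xs z t m φ ≤ FAux xs z t N φ + (t m - t N) / t 0 := by
  induction m, hNm using Nat.le_induction with
  | base => simp
  | succ m hNm ih =>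
    have htpos : ∀ k, 0 < t k := fun k => ht0.trans_le (htm (Nat.zero_le k))
    have hc1 : t m / t (m+1) ≤ 1 := div_le_one_of_le₀ (htm (Nat.le_succ m)) (htpos (m+1)).le
    have hne : t (m+1) ≠ 0 := (htpos (m+1)).ne'
    have h1 : 1 - t m / t (m+1) = (t (m+1) - t m) / t (m+1) := by
      field_simp
    have h2 : (t (m+1) - t m) / t (m+1) ≤ (t (m+1) - t m) / t 0 :=
      div_le_div_of_nonneg_left (sub_nonneg.2 (htm (Nat.le_succ m))) ht0 (htm (Nat.zero_le (m+1)))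
    have h3 := FAux_step xs z t m φ hc1
    have h4 : FAux xs z t N φ + (t m - t N) / t 0 + (t (m+1) - t m) / t 0
        = FAux xs z t N φ + (t (m+1) - t N) / t 0 := by ring
    linarith
end Main2

section Main3
variable {L : Type*} [Lattice L] (xs : L → ℝ) (z : ℕ → L) (t : ℕ → ℝ)

noncomputable def GAux (N : ℕ) : LatticeDual L → ℝ :=
  Nat.rec (FAux xs z t 0) (fun N g => fun φ => max (g φ) (FAux xs z t (N+1) φ)) N

lemma FAux_cont (n : ℕ) : Continuous (FAux xs z t n) :=
  (eAux_cont xs z n).sub (continuous_finset_sum _ fun k _ =>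
    ((continuous_const.mul (eAux_cont xs z (k+1))).sub (eAux_cont xs z k)).max
      continuous_const)

lemma GAux_cont (N : ℕ) : Continuous (GAux xs z t N) := by
  induction N with
  | zero => exact FAux_cont xs z t 0
  | succ N ih => exact ih.max (FAux_cont xs z t (N+1))

lemma FAux_le_GAux (N n : ℕ) (hn : n ≤ N) (φ : LatticeDual L) :
    FAux xs z t n φ ≤ GAux xs z t N φ := by
  induction N with
  | zero => rw [Nat.le_zero.mp hn]; exact le_refl _
  | succ N ih =>
    rcases Nat.lt_or_ge n (N+1) with h | h
    · exact (ih (Nat.lt_succ_iff.mp h)).trans (le_max_left _ _)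
    · rw [le_antisymm hn h]; exact le_max_right _ _

lemma GAux_le_fAux (N : ℕ) (φ : LatticeDual L) : GAux xs z t N φ ≤ fAux xs z t φ := by
  induction N with
  | zero => exact le_ciSup (FAux_bdd xs z t φ) 0
  | succ N ih => exact max_le ih (le_ciSup (FAux_bdd xs z t φ) (N+1))

variable (M : ℝ)

lemma fAux_le_GAux_add (ht0 : 0 < t 0) (htm : Monotone t) (hub : ∀ n, t n ≤ M)
    (N : ℕ) (φ : LatticeDual L) :
    fAux xs z t φ ≤ GAux xs z t N φ + (M - t N) / t 0 := by
  have hD : 0 ≤ (M - t N) / t 0 := div_nonneg (sub_nonneg.2 (hub N)) ht0.le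
  refine ciSup_le fun m => ?_
  rcases le_total m N with h | h
  · linarith [FAux_le_GAux xs z t N m h φ]
  · have h1 := FAux_chain xs z t ht0 htm N m h φ
    have h2 : (t m - t N) / t 0 ≤ (M - t N) / t 0 := by
      gcongr
      exact hub m
    linarith [FAux_le_GAux xs z t N N le_rfl φ]

lemma fAux_cont (ht0 : 0 < t 0) (htm : Monotone t) (hub : ∀ n, t n ≤ M)
    (htend : Filter.Tendsto t Filter.atTop (nhds M)) : Continuous (fAux xs z t) := by
  have hD : Filter.Tendsto (fun N => (M - t N) / t 0) Filter.atTop (nhds 0) := by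
    have h1 : Filter.Tendsto (fun N => M - t N) Filter.atTop (nhds (M - M)) :=
      Filter.Tendsto.sub tendsto_const_nhds htend
    have := h1.div_const (t 0)
    simpa using this
  have huni : TendstoUniformly (fun N φ => GAux xs z t N φ) (fAux xs z t) Filter.atTop := by
    rw [Metric.tendstoUniformly_iff]
    intro ε hε
    filter_upwards [Metric.tendsto_nhds.mp hD ε hε] with N hN φ
    have hle := GAux_le_fAux xs z t N φ
    have hge := fAux_le_GAux_add xs z t M ht0 htm hub N φ
    rw [Real.dist_eq, sub_zero] at hN
    rw [Real.dist_eq, abs_of_nonneg (sub_nonneg.2 hle)]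
    have := le_abs_self ((M - t N) / t 0)
    linarith
  exact huni.continuous (Filter.Eventually.of_forall (GAux_cont xs z t)).frequently

lemma fAux_smul (φ ψ : LatticeDual L) (r : ℝ) (hr0 : 0 ≤ r)
    (hψ : (ψ : L → ℝ) = r • (φ : L → ℝ)) : fAux xs z t ψ = r * fAux xs z t φ := by
  have hF : ∀ n, FAux xs z t n ψ = r * FAux xs z t n φ := by
    intro n
    unfold FAux
    have hterm : ∀ k, max ((t k / t (k+1)) * eAux xs z (k+1) ψ - eAux xs z k ψ) 0
        = r * max ((t k / t (k+1)) * eAux xs z (k+1) φ - eAux xs z k φ) 0 := by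
      intro k
      rw [eAux_smul xs z (k+1) φ ψ r hψ, eAux_smul xs z k φ ψ r hψ]
      rw [show (t k / t (k+1)) * (r * eAux xs z (k+1) φ) - r * eAux xs z k φ
          = r * ((t k / t (k+1)) * eAux xs z (k+1) φ - eAux xs z k φ) by ring]
      rw [mul_max_of_nonneg _ _ hr0, mul_zero]
    rw [eAux_smul xs z n φ ψ r hψ]
    simp_rw [hterm]
    rw [← Finset.mul_sum]
    ring
  unfold fAux
  simp_rw [hF]
  exact (Real.mul_iSup_of_nonneg hr0 _).symm

lemma fAux_xs (hxs : xs ∈ LatticeDual L) (ht0 : 0 < t 0) (htm : Monotone t)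
    (hub : ∀ n, t n ≤ M) (hte : ∀ n, eAux xs z n ⟨xs, hxs⟩ = t n)
    (htend : Filter.Tendsto t Filter.atTop (nhds M)) :
    fAux xs z t ⟨xs, hxs⟩ = M := by
  have htpos : ∀ k, 0 < t k := fun k => ht0.trans_le (htm (Nat.zero_le k))
  have hFxs : ∀ n, FAux xs z t n ⟨xs, hxs⟩ = t n := by
    intro n
    unfold FAux
    rw [hte n]
    have : ∀ k ∈ Finset.range n,
        max ((t k / t (k+1)) * eAux xs z (k+1) ⟨xs, hxs⟩ - eAux xs z k ⟨xs, hxs⟩) 0 = 0 := by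
      intro k _
      rw [hte (k+1), hte k, div_mul_cancel₀ _ (htpos (k+1)).ne']
      simp
    rw [Finset.sum_eq_zero this]
    ring
  have hsup : Filter.Tendsto t Filter.atTop (nhds (⨆ n, t n)) :=
    tendsto_atTop_ciSup htm ⟨M, by rintro _ ⟨n, rfl⟩; exact hub n⟩
  unfold fAux
  simp_rw [hFxs]
  exact tendsto_nhds_unique hsup htend

end Main3

/-- every nonzero `x* ∈ 𝕃*`, viewed as the evaluation functional
`f ↦ f(x*)` on the AM-space `C_ph(𝕃*)` (with the sup norm), attains its norm, and its norm
equals `max {|inf x*|, |sup x*|}`. -/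
theorem evaluation_on_Cph_latticeDual_attains_norm
    {L : Type*} [Lattice L] (xs : L → ℝ) (hxs : xs ∈ LatticeDual L)
    (hne : ∃ x : L, xs x ≠ 0) :
    (∀ f ∈ Cph L, (∀ φ : LatticeDual L, |f φ| ≤ 1) →
      |f ⟨xs, hxs⟩| ≤ max |sInf (Set.range xs)| |sSup (Set.range xs)|) ∧
    (∃ f ∈ Cph L, (∀ φ : LatticeDual L, |f φ| ≤ 1) ∧
      |f ⟨xs, hxs⟩| = max |sInf (Set.range xs)| |sSup (Set.range xs)|) := by
  classical
  obtain ⟨x₀, hx₀⟩ := hne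
  set M := max |sInf (Set.range xs)| |sSup (Set.range xs)| with hM
  have hrne : (Set.range xs).Nonempty := ⟨xs x₀, x₀, rfl⟩
  have habs1 : ∀ x : L, |xs x| ≤ 1 := hxs.1
  have hbddA : BddAbove (Set.range xs) :=
    ⟨1, by rintro _ ⟨x, rfl⟩; exact (le_abs_self _).trans (habs1 x)⟩
  have hbddB : BddBelow (Set.range xs) :=
    ⟨-1, by rintro _ ⟨x, rfl⟩; linarith [(abs_le.mp (habs1 x)).1]⟩
  have hxle : ∀ x : L, xs x ≤ sSup (Set.range xs) := fun x => le_csSup hbddA ⟨x, rfl⟩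
  have hxge : ∀ x : L, sInf (Set.range xs) ≤ xs x := fun x => csInf_le hbddB ⟨x, rfl⟩
  have habsM : ∀ x : L, |xs x| ≤ M := by
    intro x
    rw [abs_le]
    constructor
    · linarith [hxge x, neg_abs_le (sInf (Set.range xs)),
        le_max_left |sInf (Set.range xs)| |sSup (Set.range xs)|]
    · linarith [hxle x, le_abs_self (sSup (Set.range xs)),
        le_max_right |sInf (Set.range xs)| |sSup (Set.range xs)|]
  have hM0 : 0 < M := lt_of_lt_of_le (abs_pos.mpr hx₀) (habsM x₀)
  have hInfSup : sInf (Set.range xs) ≤ sSup (Set.range xs) := csInf_le_csSup hrne hbddB hbddA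
  have hInf1 : -1 ≤ sInf (Set.range xs) :=
    le_csInf hrne (by rintro _ ⟨x, rfl⟩; linarith [(abs_le.mp (habs1 x)).1])
  have hSup1 : sSup (Set.range xs) ≤ 1 :=
    csSup_le hrne (by rintro _ ⟨x, rfl⟩; exact (abs_le.mp (habs1 x)).2)
  have hM1 : M ≤ 1 := by
    rw [hM]
    exact max_le (abs_le.mpr ⟨hInf1, hInfSup.trans hSup1⟩)
      (abs_le.mpr ⟨hInf1.trans hInfSup, hSup1⟩)
  constructor
  · intro f hf hf1
    have hMne : M ≠ 0 := hM0.ne'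
    have hφ₀mem : (M⁻¹ • xs) ∈ LatticeDual L := by
      refine ⟨?_, ?_, ?_⟩
      · intro x
        have h1 : |(M⁻¹ • xs) x| = M⁻¹ * |xs x| := by
          simp [Pi.smul_apply, abs_mul, abs_of_nonneg (inv_nonneg.2 hM0.le)]
        rw [h1]
        calc M⁻¹ * |xs x| ≤ M⁻¹ * M := by
              exact mul_le_mul_of_nonneg_left (habsM x) (inv_nonneg.2 hM0.le)
          _ = 1 := inv_mul_cancel₀ hMne
      · intro x y
        simp only [Pi.smul_apply, smul_eq_mul, hxs.2.1 x y]
        exact mul_max_of_nonneg _ _ (inv_nonneg.2 hM0.le)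
      · intro x y
        simp only [Pi.smul_apply, smul_eq_mul, hxs.2.2 x y]
        exact mul_min_of_nonneg _ _ (inv_nonneg.2 hM0.le)
    have hev := hf.2 ⟨M⁻¹ • xs, hφ₀mem⟩ ⟨xs, hxs⟩ M hM0.le hM1 (by
      show xs = M • (M⁻¹ • xs)
      rw [smul_smul, mul_inv_cancel₀ hMne, one_smul])
    rw [hev, abs_mul, abs_of_nonneg hM0.le]
    calc M * |f ⟨M⁻¹ • xs, hφ₀mem⟩| ≤ M * 1 :=
          mul_le_mul_of_nonneg_left (hf1 _) hM0.le
      _ = M := mul_one M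
  · have hreach : ∀ c : ℝ, c < M → ∃ x : L, c < |xs x| := by
      intro c hc
      have key : c < sSup (Set.range xs) ∨ sInf (Set.range xs) < -c := by
        rw [hM, lt_max_iff] at hc
        rcases hc with h | h
        · rcases le_total 0 (sInf (Set.range xs)) with h' | h'
          · left
            rw [abs_of_nonneg h'] at h
            exact h.trans_le hInfSup
          · right
            rw [abs_of_nonpos h'] at h
            linarith
        · rcases le_total 0 (sSup (Set.range xs)) with h' | h'
          · left
            rwa [abs_of_nonneg h'] at h
          · right
            rw [abs_of_nonpos h'] at h
            linarith
      rcases key with h | h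
      · obtain ⟨_, ⟨x, rfl⟩, hx⟩ := exists_lt_of_lt_csSup hrne h
        exact ⟨x, hx.trans_le (le_abs_self _)⟩
      · obtain ⟨_, ⟨x, rfl⟩, hx⟩ := exists_lt_of_csInf_lt hrne h
        exact ⟨x, by linarith [neg_abs_le (xs x)]⟩
    have H : ∀ (n : ℕ) (x : L), ∃ y : L, |xs x| ≤ |xs y| ∧ M - 1/(n+1) ≤ |xs y| := by
      intro n x
      rcases le_or_gt (M - 1/(n+1)) |xs x| with h | h
      · exact ⟨x, le_rfl, h⟩
      · obtain ⟨y, hy⟩ := hreach (M - 1/(n+1)) (by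
          have h2 : (0:ℝ) < 1/(n+1) := by positivity
          linarith)
        exact ⟨y, by linarith, hy.le⟩
    set z : ℕ → L := fun n => Nat.rec x₀ (fun n zn => (H n zn).choose) n with hzdef
    set t : ℕ → ℝ := fun n => |xs (z n)| with htdef
    have hmono : ∀ n, t n ≤ t (n+1) := fun n => (H n (z n)).choose_spec.1
    have htm : Monotone t := monotone_nat_of_le_succ hmono
    have ht0 : 0 < t 0 := abs_pos.mpr hx₀
    have hub : ∀ n, t n ≤ M := fun n => habsM (z n)
    have hlow : ∀ n : ℕ, M - 1/(n+1) ≤ t (n+1) := fun n => (H n (z n)).choose_spec.2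
    have htend : Filter.Tendsto t Filter.atTop (nhds M) := by
      have hlowt : Filter.Tendsto (fun n : ℕ => M - 1/(n:ℝ)) Filter.atTop (nhds M) := by
        have := Filter.Tendsto.sub (tendsto_const_nhds (x := M) (f := Filter.atTop (α := ℕ)))
          tendsto_one_div_atTop_nhds_zero_nat
        simpa using this
      refine tendsto_of_tendsto_of_tendsto_of_le_of_le' hlowt tendsto_const_nhds ?_ ?_
      · rw [Filter.eventually_atTop]
        refine ⟨1, fun n hn => ?_⟩
        match n, hn with
        | (m+1), _ =>
          have := hlow m
          push_cast
          exact this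
      · exact Filter.Eventually.of_forall hub
    have hte : ∀ n, eAux xs z n ⟨xs, hxs⟩ = t n := fun n => eAux_xs xs hxs z n
    refine ⟨fAux xs z t, ⟨fAux_cont xs z t M ht0 htm hub htend,
      fun φ ψ r hr0 _ hψ => fAux_smul xs z t φ ψ r hr0 hψ⟩, ?_, ?_⟩
    · intro φ
      rw [abs_le]
      exact ⟨neg_one_le_fAux xs z t φ, fAux_le_one xs z t φ⟩
    · rw [fAux_xs xs z t M hxs ht0 htm hub hte htend, abs_of_nonneg hM0.le]
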